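/- Let F be a field, let α ∈ F^× have multiplicative order n ≥ 2, and let φ ∈ F(z) be a nonconstant rational function satisfying φ(αz) = α·φ(z). Then there exists a rational function ψ ∈ F(z) such that φ(z)/z = ψ(z^n), and consequently deg(φ) equals n·deg(ψ) or n·deg(ψ) ± 1. -/

import Mathlib

open Polynomial

private lemma coeff_comp_C_mul_X' {F : Type*} [CommSemiring F] (p : Polynomial F) (a : F) (k : ℕ) :
    (p.comp (C a * X)).coeff k = a ^ k * p.coeff k := by
  induction p using Polynomial.induction_on' with
  | add p q hp hq => simp [add_comp, hp, hq, mul_add]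
  | monomial i c =>
    rw [monomial_comp, mul_pow, ← C_pow, ← mul_assoc, ← C_mul, coeff_C_mul, coeff_X_pow,
      coeff_monomial]
    by_cases h : i = k
    · subst h; simp [mul_comm]
    · simp [h, Ne.symm h]

private lemma eq_X_pow_mul_expand {F : Type*} [Field F] (n r : ℕ) (hn : 0 < n)
    (h : Polynomial F) (H : ∀ k, h.coeff k ≠ 0 → k % n = r) :
    ∃ p : Polynomial F, h = X ^ r * expand F n p := by
  refine ⟨∑ i ∈ Finset.range (h.natDegree + 1), monomial i (h.coeff (n * i + r)), ?_⟩
  ext k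
  rw [coeff_X_pow_mul']
  by_cases hrk : r ≤ k
  · rw [if_pos hrk, coeff_expand hn]
    by_cases hdvd : n ∣ k - r
    · rw [if_pos hdvd, finset_sum_coeff]
      simp only [coeff_monomial]
      rw [Finset.sum_ite_eq' (Finset.range (h.natDegree + 1))]
      have hk : n * ((k - r) / n) + r = k := by
        rw [Nat.mul_div_cancel' hdvd]; omega
      by_cases hmem : (k - r) / n ∈ Finset.range (h.natDegree + 1)
      · rw [if_pos hmem, hk]
      · rw [if_neg hmem]
        by_contra hne
        have h1 := H k hne
        have h2 : (k - r) / n ≤ k := le_trans (Nat.div_le_self _ _) (Nat.sub_le _ _)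
        have h3 : h.natDegree + 1 ≤ (k - r) / n := by
          simpa [Finset.mem_range, not_lt] using hmem
        have h4 : h.coeff k = 0 := coeff_eq_zero_of_natDegree_lt (by omega)
        exact hne h4
    · rw [if_neg hdvd]
      by_contra hne
      have h1 := H k hne
      have hdm := Nat.div_add_mod k n
      exact hdvd ⟨k / n, by omega⟩
  · rw [if_neg hrk]
    by_contra hne
    have h1 := H k hne
    have := Nat.mod_le k n
    omega

private lemma isCoprime_of_expand {F : Type*} [Field F] {n : ℕ} (hn : 0 < n)
    {p q : Polynomial F} (h : IsCoprime (expand F n p) (expand F n q)) : IsCoprime p q := by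
  classical
  rw [← EuclideanDomain.gcd_isUnit_iff]
  have hu : IsUnit (expand F n (EuclideanDomain.gcd p q)) :=
    h.isUnit_of_dvd' ((expand F n).toRingHom.map_dvd (EuclideanDomain.gcd_dvd_left p q))
      ((expand F n).toRingHom.map_dvd (EuclideanDomain.gcd_dvd_right p q))
  obtain ⟨c, hc, hcd⟩ := Polynomial.isUnit_iff.mp hu
  have hgc : EuclideanDomain.gcd p q = C c := (expand_eq_C hn).mp hcd.symm
  rw [hgc]
  exact hc.map C


theorem invariant_under_mul_root_of_unity
    {F : Type*} [Field F] (n : ℕ) (hn : 2 ≤ n)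
    (α : Fˣ) (hα : orderOf α = n)
    (f g : Polynomial F) (hg : g ≠ 0) (hcop : IsCoprime f g)
    (hnc : 1 ≤ max f.natDegree g.natDegree)
    (hcomm : f.comp (C (α : F) * X) * g = C (α : F) * f * g.comp (C (α : F) * X)) :
    ∃ p q : Polynomial F, q ≠ 0 ∧ IsCoprime p q ∧
      f * q.comp (X ^ n) = X * g * p.comp (X ^ n) ∧
      (max f.natDegree g.natDegree = n * max p.natDegree q.natDegree ∨
       max f.natDegree g.natDegree = n * max p.natDegree q.natDegree + 1 ∨
       max f.natDegree g.natDegree + 1 = n * max p.natDegree q.natDegree) := by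
  have hn0 : 0 < n := by omega
  have ha0 : (α : F) ≠ 0 := α.ne_zero
  set l : Polynomial F := C (α : F) * X with hl
  have hf : f ≠ 0 := by
    rintro rfl
    have h1 := isCoprime_zero_left.mp hcop
    have h2 : g.natDegree = 0 := natDegree_eq_zero_of_isUnit h1
    simp [h2] at hnc
  have hpow : ∀ k : ℕ, (α : F) ^ k = 1 ↔ n ∣ k := by
    intro k
    rw [← Units.val_pow_eq_pow_val, Units.val_eq_one, ← hα]
    exact orderOf_dvd_iff_pow_eq_one.symm
  -- coprimality of the composed polynomials
  have hcopl : IsCoprime (f.comp l) (g.comp l) := by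
    have := hcop.map (aeval l : Polynomial F →ₐ[F] Polynomial F).toRingHom
    simpa [comp_eq_aeval] using this
  have hdl : g.comp l ∣ g := by
    have h1 : g.comp l ∣ f.comp l * g := by rw [hcomm]; exact dvd_mul_left _ _
    exact hcopl.symm.dvd_of_dvd_mul_left h1
  have hgl : g.comp l ≠ 0 := fun h => hg (by simpa [h] using hdl)
  have hdeg : (g.comp l).natDegree = g.natDegree := by
    rw [natDegree_comp, natDegree_C_mul_X _ ha0, mul_one]
  obtain ⟨k0, hk0⟩ := hdl
  have hk0ne : k0 ≠ 0 := by rintro rfl; rw [mul_zero] at hk0; exact hg hk0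
  have hk0deg : k0.natDegree = 0 := by
    have := natDegree_mul hgl hk0ne
    rw [← hk0, hdeg] at this
    omega
  set c : F := k0.coeff 0 with hcdef
  have hk0C : k0 = C c := eq_C_of_natDegree_eq_zero hk0deg
  have hc : c ≠ 0 := fun h => hk0ne (by rw [hk0C, h, C_0])
  set u : F := c⁻¹ with hudef
  have hu0 : u ≠ 0 := inv_ne_zero hc
  have hgu : g.comp l = C u * g := by
    calc g.comp l = g.comp l * (C c * C u) := by
          rw [← C_mul, mul_inv_cancel₀ hc, C_1, mul_one]
      _ = C u * (g.comp l * C c) := by ring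
      _ = C u * g := by rw [← hk0C, ← hk0]
  have hfu : f.comp l = C ((α : F) * u) * f := by
    apply mul_right_cancel₀ hg
    rw [hcomm, hgu, C_mul]; ring
  have hgc : ∀ k, (α : F) ^ k * g.coeff k = u * g.coeff k := by
    intro k
    have h := congrArg (fun p => Polynomial.coeff p k) hgu
    simp only [hl, coeff_comp_C_mul_X', coeff_C_mul] at h
    exact h
  have hfc : ∀ k, (α : F) ^ k * f.coeff k = ((α : F) * u) * f.coeff k := by
    intro k
    have h := congrArg (fun p => Polynomial.coeff p k) hfu
    simp only [hl, coeff_comp_C_mul_X', coeff_C_mul] at h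
    exact h
  by_cases hg0 : g.coeff 0 = 0
  · -- case B : f(0) ≠ 0, ψ has a pole at 0
    have hf0 : f.coeff 0 ≠ 0 := by
      intro hf0
      exact Polynomial.not_isUnit_X
        (hcop.isUnit_of_dvd' (X_dvd_iff.mpr hf0) (X_dvd_iff.mpr hg0))
    have hau : (α : F) * u = 1 := by
      have h1 := hfc 0
      rw [pow_zero, one_mul] at h1
      exact (mul_right_cancel₀ hf0 (by rw [one_mul, ← h1])).symm
    have hfcond : ∀ k, f.coeff k ≠ 0 → k % n = 0 := by
      intro k hk
      have h1 := hfc k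
      rw [hau, one_mul] at h1
      have h2 : (α : F) ^ k = 1 := by
        nth_rewrite 2 [← one_mul (f.coeff k)] at h1
        exact mul_right_cancel₀ hk h1
      have := (hpow k).mp h2
      omega
    have hgcond : ∀ k, g.coeff k ≠ 0 → k % n = n - 1 := by
      intro k hk
      have h1 : (α : F) ^ k = u := mul_right_cancel₀ hk (hgc k)
      have h2 : (α : F) ^ (k + 1) = 1 := by
        rw [pow_succ, h1, mul_comm]
        exact hau
      obtain ⟨t, ht⟩ := (hpow (k + 1)).mp h2
      rcases t with _ | t'
      · omega
      · rw [Nat.mul_succ] at ht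
        have hk' : k = (n - 1) + n * t' := by
          set m := n * t' with hm
          omega
        rw [hk', Nat.add_mul_mod_self_left, Nat.mod_eq_of_lt (by omega)]
    obtain ⟨p, hp⟩ := eq_X_pow_mul_expand n 0 hn0 f hfcond
    obtain ⟨q0, hq0⟩ := eq_X_pow_mul_expand n (n - 1) hn0 g hgcond
    rw [pow_zero, one_mul] at hp
    have hpne : p ≠ 0 := by
      rintro rfl; rw [map_zero] at hp; exact hf hp
    have hq0ne : q0 ≠ 0 := by
      rintro rfl; rw [map_zero, mul_zero] at hq0; exact hg hq0
    have hp0 : p.coeff 0 ≠ 0 := by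
      intro h
      apply hf0
      rw [hp, coeff_expand hn0]
      simpa using h
    refine ⟨p, X * q0, mul_ne_zero X_ne_zero hq0ne, ?_, ?_, ?_⟩
    · -- coprimality
      have h1 : IsCoprime p X := by
        rw [isCoprime_comm]
        exact (Polynomial.irreducible_X.coprime_iff_not_dvd).mpr
          (fun h => hp0 (X_dvd_iff.mp h))
      have h2 : IsCoprime p q0 := by
        apply isCoprime_of_expand hn0
        have hdvdq : expand F n q0 ∣ g := ⟨X ^ (n - 1), by rw [hq0, mul_comm]⟩
        exact (hcop.of_isCoprime_of_dvd_left (dvd_of_eq hp.symm)).of_isCoprime_of_dvd_right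
          hdvdq
      exact h1.mul_right h2
    · -- the functional equation
      rw [hp, hq0, mul_comp, X_comp, ← expand_eq_comp_X_pow, ← expand_eq_comp_X_pow]
      have hX : (X : Polynomial F) * X ^ (n - 1) = X ^ n := by
        rw [← pow_succ']
        congr 1
        omega
      calc expand F n p * (X ^ n * expand F n q0)
          = (X * X ^ (n - 1)) * expand F n q0 * expand F n p := by rw [hX]; ring
        _ = X * (X ^ (n - 1) * expand F n q0) * expand F n p := by ring
    · -- degrees
      have hdf : f.natDegree = n * p.natDegree := by
        rw [hp, natDegree_expand]; ring
      have hdg : g.natDegree = (n - 1) + n * q0.natDegree := by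
        rw [hq0, natDegree_mul (pow_ne_zero _ X_ne_zero) (by
          simpa using (expand_eq_zero hn0).not.mpr hq0ne), natDegree_X_pow,
          natDegree_expand]
        ring
      have hdq : (X * q0).natDegree = 1 + q0.natDegree := by
        rw [natDegree_mul X_ne_zero hq0ne, natDegree_X]
      rw [hdf, hdg, hdq]
      rcases le_or_gt (1 + q0.natDegree) p.natDegree with h | h
      · have h1 : n * (1 + q0.natDegree) ≤ n * p.natDegree := Nat.mul_le_mul_left n h
        rw [Nat.mul_add, Nat.mul_one] at h1
        rw [max_eq_left h, max_eq_left (by omega)]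
        left; rfl
      · have h1 : n * p.natDegree ≤ n * q0.natDegree :=
          Nat.mul_le_mul_left n (by omega)
        rw [max_eq_right (le_of_lt h), max_eq_right (by omega), Nat.mul_add, Nat.mul_one]
        right; right
        omega
  · -- case A : g(0) ≠ 0
    have hu1 : u = 1 := by
      have h1 := hgc 0
      rw [pow_zero, one_mul] at h1
      exact mul_right_cancel₀ hg0 (by rw [one_mul, ← h1])
    have hgcond : ∀ k, g.coeff k ≠ 0 → k % n = 0 := by
      intro k hk
      have h1 : (α : F) ^ k = u := mul_right_cancel₀ hk (hgc k)
      rw [hu1] at h1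
      have := (hpow k).mp h1
      omega
    have hfcond : ∀ k, f.coeff k ≠ 0 → k % n = 1 := by
      intro k hk
      have h1 : (α : F) ^ k = (α : F) := by
        have := mul_right_cancel₀ hk (hfc k)
        rwa [hu1, mul_one] at this
      rcases k with _ | m
      · exfalso
        rw [pow_zero] at h1
        have : orderOf α = 1 := by
          rw [orderOf_eq_one_iff]
          ext
          exact h1.symm
        omega
      · have h2 : (α : F) ^ m = 1 := by
          have := h1
          rw [pow_succ'] at this
          exact mul_left_cancel₀ ha0 (by rw [this, mul_one])
        obtain ⟨t, ht⟩ := (hpow m).mp h2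
        have hk' : m + 1 = 1 + n * t := by
          set m' := n * t with hm'
          omega
        rw [hk', Nat.add_mul_mod_self_left, Nat.mod_eq_of_lt (by omega)]
    obtain ⟨p, hp⟩ := eq_X_pow_mul_expand n 1 hn0 f hfcond
    obtain ⟨q, hq⟩ := eq_X_pow_mul_expand n 0 hn0 g hgcond
    rw [pow_zero, one_mul] at hq
    rw [pow_one] at hp
    have hpne : p ≠ 0 := by
      rintro rfl; rw [map_zero, mul_zero] at hp; exact hf hp
    have hqne : q ≠ 0 := by
      rintro rfl; rw [map_zero] at hq; exact hg hq
    refine ⟨p, q, hqne, ?_, ?_, ?_⟩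
    · apply isCoprime_of_expand hn0
      have hdvdp : expand F n p ∣ f := ⟨X, by rw [hp, mul_comm]⟩
      exact (hcop.of_isCoprime_of_dvd_left hdvdp).of_isCoprime_of_dvd_right
        (dvd_of_eq hq.symm)
    · rw [hp, hq, ← expand_eq_comp_X_pow, ← expand_eq_comp_X_pow]
      ring
    · have hdf : f.natDegree = n * p.natDegree + 1 := by
        rw [hp, natDegree_mul X_ne_zero (by
          simpa using (expand_eq_zero hn0).not.mpr hpne), natDegree_X,
          natDegree_expand]
        ring
      have hdg : g.natDegree = n * q.natDegree := by
        rw [hq, natDegree_expand]; ring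
      rw [hdf, hdg]
      rcases le_or_gt q.natDegree p.natDegree with h | h
      · have h1 : n * q.natDegree ≤ n * p.natDegree := Nat.mul_le_mul_left n h
        rw [max_eq_left h, max_eq_left (by omega)]
        right; left; rfl
      · have h1 : n * (p.natDegree + 1) ≤ n * q.natDegree := Nat.mul_le_mul_left n h
        rw [Nat.mul_add, Nat.mul_one] at h1
        rw [max_eq_right (le_of_lt h), max_eq_right (by omega)]
        left; rfl
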